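/- Let (X_n)_{n ≥ 0} be an i.i.d. sequence of integer-valued random variables with ℙ[X_0 ≥ -1] = 1, and let (S_n) be the associated skip-free to the left random walk. Let τ = inf{n > 0 : S_n ≥ 0} be the weak upper record epoch. Then for all integers j, k with 0 ≤ j ≤ k, ℙ[τ < ∞, S_τ = j, X_{τ-1} = k] = ℙ[X_0 = k] · c^{k-j}, where c = ℙ[∃ n ≥ 0, S_n = -1]. -/

import Mathlib

open MeasureTheory ProbabilityTheory

namespace WeakRecordAux

variable {Ω : Type*} [MeasurableSpace Ω]
set_option linter.unusedSectionVars false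

/-- Partial sums of the walk. -/
def pS (X : ℕ → Ω → ℤ) (n : ℕ) (ω : Ω) : ℤ := ∑ l ∈ Finset.range n, X l ω

/-- A finite tuple of the increments, reindexed by `e`. -/
def tup (X : ℕ → Ω → ℤ) (t : ℕ) (e : Fin t → ℕ) (ω : Ω) : Fin t → ℤ := fun i => X (e i) ω

/-- Partial sums of a finite vector. -/
def psum (t m : ℕ) (v : Fin t → ℤ) : ℤ :=
  ∑ l ∈ Finset.range m, if h : l < t then v ⟨l, h⟩ else 0

lemma measurable_pS {X : ℕ → Ω → ℤ} (hmeas : ∀ n, Measurable (X n)) (n : ℕ) :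
    Measurable (pS X n) :=
  Finset.measurable_sum _ fun i _ => hmeas i

lemma measurable_tup {X : ℕ → Ω → ℤ} (hmeas : ∀ n, Measurable (X n)) (t : ℕ) (e : Fin t → ℕ) :
    Measurable (tup X t e) :=
  measurable_pi_lambda _ fun i => hmeas (e i)

lemma measurableSet_pi' {t : ℕ} (C : Set (Fin t → ℤ)) : MeasurableSet C :=
  (Set.to_countable C).measurableSet

lemma pS_zero (X : ℕ → Ω → ℤ) (ω : Ω) : pS X 0 ω = 0 := by simp [pS]

lemma pS_succ (X : ℕ → Ω → ℤ) (n : ℕ) (ω : Ω) :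
    pS X (n + 1) ω = pS X n ω + X n ω := by
  simp [pS, Finset.sum_range_succ]

lemma psum_tup_id {X : ℕ → Ω → ℤ} {t m : ℕ} (hm : m ≤ t) (ω : Ω) :
    psum t m (tup X t (fun i => (i : ℕ)) ω) = pS X m ω := by
  unfold psum pS tup
  refine Finset.sum_congr rfl fun l hl => ?_
  rw [Finset.mem_range] at hl
  rw [dif_pos (lt_of_lt_of_le hl hm)]

lemma psum_tup_rev {X : ℕ → Ω → ℤ} {t m : ℕ} (hm : m ≤ t) (ω : Ω) :
    psum t m (tup X t (fun i => t - 1 - (i : ℕ)) ω) = pS X t ω - pS X (t - m) ω := by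
  unfold psum pS tup
  rw [← Finset.sum_Ico_eq_sub _ (Nat.sub_le t m)]
  refine Finset.sum_nbij' (fun l => t - 1 - l) (fun r => t - 1 - r) ?_ ?_ ?_ ?_ ?_
  · intro a ha; rw [Finset.mem_range] at ha; rw [Finset.mem_Ico]; omega
  · intro a ha; rw [Finset.mem_Ico] at ha; rw [Finset.mem_range]; omega
  · intro a ha; rw [Finset.mem_range] at ha; omega
  · intro a ha; rw [Finset.mem_Ico] at ha; omega
  · intro a ha; rw [Finset.mem_range] at ha; dsimp only
    rw [dif_pos (by omega : a < t)]

lemma psum_tup_shift {X : ℕ → Ω → ℤ} {M m : ℕ} (s : ℕ) (hm : m ≤ M) (ω : Ω) :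
    psum M m (tup X M (fun i => s + (i : ℕ)) ω) = pS X (s + m) ω - pS X s ω := by
  unfold psum pS tup
  rw [← Finset.sum_Ico_eq_sub _ (Nat.le_add_right s m), Finset.sum_Ico_eq_sum_range]
  simp only [Nat.add_sub_cancel_left]
  refine Finset.sum_congr rfl fun l hl => ?_
  rw [Finset.mem_range] at hl
  rw [dif_pos (lt_of_lt_of_le hl hm)]




variable {μ : Measure Ω} [IsProbabilityMeasure μ] {X : ℕ → Ω → ℤ}

/-- The joint law of any injectively reindexed finite subfamily of an iid family is the
product of the common marginal. -/
lemma law_tup (hmeas : ∀ n, Measurable (X n))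
    (hindep : iIndepFun X μ)
    (hident : ∀ n, IdentDistrib (X n) (X 0) μ μ)
    {t : ℕ} {e : Fin t → ℕ} (he : Function.Injective e) :
    μ.map (fun ω i => X (e i) ω) = Measure.pi (fun _ : Fin t => μ.map (X 0)) := by
  classical
  haveI : IsProbabilityMeasure (μ.map (X 0)) :=
    Measure.isProbabilityMeasure_map (hmeas 0).aemeasurable
  refine (Measure.pi_eq fun s hs => ?_).symm
  have htup : Measurable (fun ω (i : Fin t) => X (e i) ω) :=
    measurable_pi_lambda _ fun i => hmeas (e i)
  rw [Measure.map_apply htup (MeasurableSet.univ_pi fun i => hs i)]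
  have hpre : (fun ω (i : Fin t) => X (e i) ω) ⁻¹' Set.pi Set.univ s
      = ⋂ i : Fin t, X (e i) ⁻¹' s i := by
    ext ω; simp [Set.mem_pi]
  rw [hpre]
  -- sets indexed by ℕ
  set sets : ℕ → Set ℤ := fun n => if h : ∃ i, e i = n then s h.choose else Set.univ with hsets
  have hsets_e : ∀ i, sets (e i) = s i := by
    intro i
    have h : ∃ i', e i' = e i := ⟨i, rfl⟩
    have := h.choose_spec
    rw [hsets]; dsimp only; rw [dif_pos h, he this]
  have hiInter : (⋂ i : Fin t, X (e i) ⁻¹' s i)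
      = ⋂ n ∈ Finset.image e Finset.univ, X n ⁻¹' sets n := by
    ext ω
    simp only [Set.mem_iInter, Finset.mem_image, Finset.mem_univ, true_and]
    constructor
    · rintro h n ⟨i, rfl⟩; rw [hsets_e]; exact h i
    · intro h i; rw [← hsets_e i]; exact h (e i) ⟨i, rfl⟩
  rw [hiInter, hindep.measure_inter_preimage_eq_mul _
    (fun n _ => (Set.to_countable _).measurableSet)]
  rw [Finset.prod_image (fun i _ j _ h => he h)]
  refine Finset.prod_congr rfl fun i _ => ?_
  rw [hsets_e, ← Measure.map_apply (hmeas (e i)) (Set.to_countable _).measurableSet,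
    (hident (e i)).map_eq, Measure.map_apply (hmeas 0) (Set.to_countable _).measurableSet]

/-- Measures of tuple events only depend on the set, not on the injective reindexing. -/
lemma tup_measure_eq (hmeas : ∀ n, Measurable (X n))
    (hindep : iIndepFun X μ)
    (hident : ∀ n, IdentDistrib (X n) (X 0) μ μ)
    {t : ℕ} {e e' : Fin t → ℕ} (he : Function.Injective e) (he' : Function.Injective e')
    (C : Set (Fin t → ℤ)) :
    μ (tup X t e ⁻¹' C) = μ (tup X t e' ⁻¹' C) := by
  have h1 := Measure.map_apply (μ := μ) (measurable_tup hmeas t e) (measurableSet_pi' C)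
  have h2 := Measure.map_apply (μ := μ) (measurable_tup hmeas t e') (measurableSet_pi' C)
  rw [← h1, ← h2]
  unfold tup
  rw [law_tup hmeas hindep hident he, law_tup hmeas hindep hident he']

/-- The tuple of the first `t` increments is independent of `X t`. -/
lemma indep_tup_last (hmeas : ∀ n, Measurable (X n))
    (hindep : iIndepFun X μ) (t : ℕ) :
    IndepFun (tup X t (fun i => (i : ℕ))) (X t) μ := by
  have h := hindep.indepFun_finset (Finset.range t) {t}
    (Finset.disjoint_singleton_right.mpr (by simp)) hmeas
  have hφ : Measurable (fun v : ↥(Finset.range t) → ℤ =>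
      (fun i : Fin t => v ⟨(i : ℕ), Finset.mem_range.mpr i.2⟩)) :=
    measurable_pi_lambda _ fun i => measurable_pi_apply _
  have hψ : Measurable (fun v : ↥({t} : Finset ℕ) → ℤ => v ⟨t, Finset.mem_singleton_self t⟩) :=
    measurable_pi_apply _
  exact h.comp hφ hψ

/-- The tuple of the first `s` increments is independent of the next `M` increments. -/
lemma indep_tup_block (hmeas : ∀ n, Measurable (X n))
    (hindep : iIndepFun X μ) (s M : ℕ) :
    IndepFun (tup X s (fun i => (i : ℕ))) (tup X M (fun i => s + (i : ℕ))) μ := by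
  have hdisj : Disjoint (Finset.range s) (Finset.Ico s (s + M)) := by
    rw [Finset.disjoint_left]
    intro a ha hb
    rw [Finset.mem_range] at ha; rw [Finset.mem_Ico] at hb; omega
  have h := hindep.indepFun_finset (Finset.range s) (Finset.Ico s (s + M)) hdisj hmeas
  have hφ : Measurable (fun v : ↥(Finset.range s) → ℤ =>
      (fun i : Fin s => v ⟨(i : ℕ), Finset.mem_range.mpr i.2⟩)) :=
    measurable_pi_lambda _ fun i => measurable_pi_apply _
  have hψ : Measurable (fun v : ↥(Finset.Ico s (s + M)) → ℤ =>
      (fun i : Fin M => v ⟨s + (i : ℕ), Finset.mem_Ico.mpr ⟨Nat.le_add_right _ _, by omega⟩⟩)) :=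
    measurable_pi_lambda _ fun i => measurable_pi_apply _
  exact h.comp hφ hψ


/-- Event: the walk ever hits level `a`. -/
def Hit (X : ℕ → Ω → ℤ) (a : ℤ) : Set Ω := {ω | ∃ n, pS X n ω = a}

/-- Event: first weak passage of level `a` at time `t`, exactly. -/
def Fh (X : ℕ → Ω → ℤ) (a : ℤ) (t : ℕ) : Set Ω :=
  {ω | (∀ r, r < t → a < pS X r ω) ∧ pS X t ω = a}

/-- The model set in tuple space: strictly negative partial sums, ending at `a`. -/
def CA (a : ℤ) (t : ℕ) : Set (Fin t → ℤ) :=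
  {v | (∀ m, 0 < m → m ≤ t → psum t m v < 0) ∧ psum t t v = a}

lemma id_CA (X : ℕ → Ω → ℤ) (a : ℤ) (t : ℕ) :
    tup X t (fun i => (i : ℕ)) ⁻¹' CA a t
      = {ω | (∀ m, 0 < m → m ≤ t → pS X m ω < 0) ∧ pS X t ω = a} := by
  ext ω
  simp only [Set.mem_preimage, CA, Set.mem_setOf_eq]
  constructor
  · rintro ⟨h1, h2⟩
    exact ⟨fun m hm hmt => by rw [← psum_tup_id hmt ω]; exact h1 m hm hmt,
      by rw [← psum_tup_id le_rfl ω]; exact h2⟩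
  · rintro ⟨h1, h2⟩
    exact ⟨fun m hm hmt => by rw [psum_tup_id hmt ω]; exact h1 m hm hmt,
      by rw [psum_tup_id le_rfl ω]; exact h2⟩

lemma rev_CA (X : ℕ → Ω → ℤ) (a : ℤ) (t : ℕ) :
    tup X t (fun i => t - 1 - (i : ℕ)) ⁻¹' CA a t = Fh X a t := by
  ext ω
  simp only [Set.mem_preimage, CA, Fh, Set.mem_setOf_eq]
  constructor
  · rintro ⟨h1, h2⟩
    rw [psum_tup_rev le_rfl ω, Nat.sub_self, pS_zero, sub_zero] at h2
    refine ⟨fun r hr => ?_, h2⟩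
    have h := h1 (t - r) (by omega) (by omega)
    rw [psum_tup_rev (by omega) ω, h2] at h
    have : t - (t - r) = r := by omega
    rw [this] at h; linarith
  · rintro ⟨h1, h2⟩
    constructor
    · intro m hm hmt
      rw [psum_tup_rev hmt ω, h2]
      have h := h1 (t - m) (by omega)
      linarith
    · rw [psum_tup_rev le_rfl ω, Nat.sub_self, pS_zero, sub_zero]; exact h2

lemma measurableSet_Fh {X : ℕ → Ω → ℤ} (hmeas : ∀ n, Measurable (X n)) (a : ℤ) (t : ℕ) :
    MeasurableSet (Fh X a t) := by
  rw [← rev_CA]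
  exact (measurable_tup hmeas t _) (measurableSet_pi' _)

lemma measurableSet_Hit {X : ℕ → Ω → ℤ} (hmeas : ∀ n, Measurable (X n)) (a : ℤ) :
    MeasurableSet (Hit X a) := by
  have : Hit X a = ⋃ n, pS X n ⁻¹' {a} := by
    ext ω; simp [Hit]
  rw [this]
  exact MeasurableSet.iUnion fun n =>
    (measurable_pS hmeas n) ((Set.to_countable _).measurableSet)

/-- Skip-free crossing: if the increments are `≥ -1` and the walk is `≤ a ≤ 0` at time `n`,
it has visited `a` at some time `≤ n`. -/
lemma crossing {X : ℕ → Ω → ℤ} {ω : Ω} (hω : ∀ l, -1 ≤ X l ω) {a : ℤ} (ha : a ≤ 0)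
    {n : ℕ} (h : pS X n ω ≤ a) : ∃ m, m ≤ n ∧ pS X m ω = a := by
  induction n with
  | zero => exact ⟨0, le_rfl, by rw [pS_zero]; rw [pS_zero] at h; omega⟩
  | succ n ih =>
    by_cases hn : pS X n ω ≤ a
    · obtain ⟨m, hm, hma⟩ := ih hn
      exact ⟨m, Nat.le_succ_of_le hm, hma⟩
    · push_neg at hn
      have hX := hω n
      have := pS_succ X n ω
      refine ⟨n + 1, le_rfl, ?_⟩
      omega

/-- First weak passage: a.s. (given skip-freeness), hitting `a ≤ 0` implies membership in some
exact first-passage event. -/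
lemma exists_Fh {X : ℕ → Ω → ℤ} {ω : Ω} (hω : ∀ l, -1 ≤ X l ω) {a : ℤ} (ha : a ≤ 0)
    (h : ω ∈ Hit X a) : ∃ t, ω ∈ Fh X a t := by
  classical
  obtain ⟨n, hn⟩ := h
  have hex : ∃ n, pS X n ω ≤ a := ⟨n, le_of_eq hn⟩
  set t := Nat.find hex with ht
  have htle : pS X t ω ≤ a := Nat.find_spec hex
  have hlt : ∀ r, r < t → a < pS X r ω := by
    intro r hr
    have := Nat.find_min hex hr
    omega
  refine ⟨t, hlt, ?_⟩
  rcases Nat.eq_zero_or_pos t with h0 | hpos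
  · rw [h0, pS_zero]; rw [h0, pS_zero] at htle; omega
  · have h1 : a < pS X (t - 1) ω := hlt (t - 1) (by omega)
    have h2 : pS X t ω = pS X (t - 1) ω + X (t - 1) ω := by
      have h3 := pS_succ X (t - 1) ω
      rwa [show t - 1 + 1 = t from by omega] at h3
    have hX := hω (t - 1)
    omega

/-- The skip-free good set has full measure. -/
lemma good_ae (hmeas : ∀ n, Measurable (X n))
    (hident : ∀ n, IdentDistrib (X n) (X 0) μ μ)
    (hskip : ∀ᵐ ω ∂μ, -1 ≤ X 0 ω) :
    ∀ᵐ ω ∂μ, ∀ l, -1 ≤ X l ω := by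
  rw [MeasureTheory.ae_all_iff]
  intro l
  have h0 : μ (X 0 ⁻¹' {x : ℤ | x < -1}) = 0 := by
    have := ae_iff.mp hskip
    convert this using 2
    ext ω; simp [not_le]
  have hl : μ (X l ⁻¹' {x : ℤ | x < -1}) = 0 := by
    rw [← Measure.map_apply (hmeas l) ((Set.to_countable _).measurableSet),
      (hident l).map_eq,
      Measure.map_apply (hmeas 0) ((Set.to_countable _).measurableSet)]
    exact h0
  rw [ae_iff]
  convert hl using 2
  ext ω; simp [not_le]

/-- Summing exact first-passage probabilities gives the hitting probability. -/
lemma sum_Fh (hmeas : ∀ n, Measurable (X n))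
    (hident : ∀ n, IdentDistrib (X n) (X 0) μ μ)
    (hskip : ∀ᵐ ω ∂μ, -1 ≤ X 0 ω) {a : ℤ} (ha : a ≤ 0) :
    ∑' t, μ (Fh X a t) = μ (Hit X a) := by
  have hdisj : Pairwise (Function.onFun Disjoint (Fh X a)) := by
    intro s t hst
    rcases hst.lt_or_gt with h | h
    · refine Set.disjoint_left.mpr fun ω hs htt => ?_
      exact absurd hs.2 (ne_of_gt (htt.1 s h))
    · refine Set.disjoint_left.mpr fun ω hs htt => ?_
      exact absurd htt.2 (ne_of_gt (hs.1 t h))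
  rw [← measure_iUnion hdisj fun t => measurableSet_Fh hmeas a t]
  refine measure_congr ?_
  rw [Filter.eventuallyEq_set]
  filter_upwards [good_ae hmeas hident hskip] with ω hω
  constructor
  · rintro ⟨_, ⟨t, rfl⟩, hmem⟩
    exact ⟨t, hmem.2⟩
  · intro h
    obtain ⟨t, hFh⟩ := exists_Fh hω ha h
    exact Set.mem_iUnion.mpr ⟨t, hFh⟩
/-- The model tail set: the vector's partial sums hit `-d` within its length. -/
def CT (d : ℕ) (M : ℕ) : Set (Fin M → ℤ) :=
  {w | ∃ t, t ≤ M ∧ psum M t w = -(d : ℤ)}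

lemma id_Fh (X : ℕ → Ω → ℤ) (a : ℤ) (s : ℕ) :
    tup X s (fun i => (i : ℕ)) ⁻¹'
        {v : Fin s → ℤ | (∀ r, r < s → a < psum s r v) ∧ psum s s v = a}
      = Fh X a s := by
  ext ω
  simp only [Set.mem_preimage, Fh, Set.mem_setOf_eq]
  constructor
  · rintro ⟨h1, h2⟩
    refine ⟨fun r hr => ?_, by rw [← psum_tup_id le_rfl ω]; exact h2⟩
    rw [← psum_tup_id (le_of_lt hr) ω]; exact h1 r hr
  · rintro ⟨h1, h2⟩
    refine ⟨fun r hr => ?_, by rw [psum_tup_id le_rfl ω]; exact h2⟩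
    rw [psum_tup_id (le_of_lt hr) ω]; exact h1 r hr

lemma tailM_eq (X : ℕ → Ω → ℤ) (d : ℕ) (s M : ℕ) :
    tup X M (fun i => s + (i : ℕ)) ⁻¹' CT d M
      = {ω | ∃ t, t ≤ M ∧ pS X (s + t) ω - pS X s ω = -(d : ℤ)} := by
  ext ω
  simp only [Set.mem_preimage, CT, Set.mem_setOf_eq]
  constructor
  · rintro ⟨t, ht, h⟩
    exact ⟨t, ht, by rw [← psum_tup_shift s ht ω]; exact h⟩
  · rintro ⟨t, ht, h⟩
    exact ⟨t, ht, by rw [psum_tup_shift s ht ω]; exact h⟩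

lemma tailM0_eq (X : ℕ → Ω → ℤ) (d : ℕ) (M : ℕ) :
    tup X M (fun i => (i : ℕ)) ⁻¹' CT d M
      = {ω | ∃ t, t ≤ M ∧ pS X t ω = -(d : ℤ)} := by
  ext ω
  simp only [Set.mem_preimage, CT, Set.mem_setOf_eq]
  constructor
  · rintro ⟨t, ht, h⟩
    exact ⟨t, ht, by rw [← psum_tup_id ht ω]; exact h⟩
  · rintro ⟨t, ht, h⟩
    exact ⟨t, ht, by rw [psum_tup_id ht ω]; exact h⟩

lemma hit_succ (hmeas : ∀ n, Measurable (X n))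
    (hindep : iIndepFun X μ)
    (hident : ∀ n, IdentDistrib (X n) (X 0) μ μ)
    (hskip : ∀ᵐ ω ∂μ, -1 ≤ X 0 ω) (d : ℕ) :
    μ (Hit X (-(d : ℤ) - 1)) = μ (Hit X (-1)) * μ (Hit X (-(d : ℤ))) := by
  classical
  set TailM : ℕ → ℕ → Set Ω := fun s M => tup X M (fun i => s + (i : ℕ)) ⁻¹' CT d M with hTailM
  set piece : ℕ → Set Ω := fun s => Fh X (-1) s ∩ ⋃ M, TailM s M with hpiece
  have hTailM_meas : ∀ s M, MeasurableSet (TailM s M) := fun s M =>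
    (measurable_tup hmeas M _) (measurableSet_pi' _)
  have hpiece_meas : ∀ s, MeasurableSet (piece s) := fun s =>
    (measurableSet_Fh hmeas _ s).inter (MeasurableSet.iUnion fun M => hTailM_meas s M)
  -- a.e. identification of the hit event with the disjoint union of pieces
  have hae : μ (Hit X (-(d : ℤ) - 1)) = μ (⋃ s, piece s) := by
    refine measure_congr ?_
    rw [Filter.eventuallyEq_set]
    filter_upwards [good_ae hmeas hident hskip] with ω hω
    constructor
    · rintro ⟨n, hn⟩
      have hhit1 : ω ∈ Hit X (-1) := by
        obtain ⟨m, _, hm⟩ := crossing hω (by omega : (-1 : ℤ) ≤ 0)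
          (le_of_eq (by omega : pS X n ω = -1 + (-(d : ℤ))) |>.trans (by omega))
        exact ⟨m, hm⟩
      obtain ⟨s, hFh⟩ := exists_Fh hω (by omega) hhit1
      have hsn : s ≤ n := by
        by_contra hc
        push_neg at hc
        have := hFh.1 n hc
        omega
      refine Set.mem_iUnion.mpr ⟨s, hFh, Set.mem_iUnion.mpr ⟨n - s, ?_⟩⟩
      show ω ∈ tup X (n - s) (fun i => s + (i : ℕ)) ⁻¹' CT d (n - s)
      rw [tailM_eq]
      refine ⟨n - s, le_rfl, ?_⟩
      rw [show s + (n - s) = n from by omega, hn, hFh.2]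
      omega
    · intro h
      obtain ⟨_, ⟨s, rfl⟩, hFh, hT⟩ := h
      obtain ⟨_, ⟨M, rfl⟩, hM⟩ := hT
      have hM' : ω ∈ tup X M (fun i => s + (i : ℕ)) ⁻¹' CT d M := hM
      rw [tailM_eq] at hM'
      obtain ⟨t, _, ht⟩ := hM'
      refine ⟨s + t, ?_⟩
      have := hFh.2
      omega
  rw [hae]
  -- disjointness of pieces
  have hdisj : Pairwise (Function.onFun Disjoint piece) := by
    intro s t hst
    rcases hst.lt_or_gt with h | h
    · refine Set.disjoint_left.mpr fun ω hs htt => ?_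
      exact absurd hs.1.2 (ne_of_gt (htt.1.1 s h))
    · refine Set.disjoint_left.mpr fun ω hs htt => ?_
      exact absurd htt.1.2 (ne_of_gt (hs.1.1 t h))
  rw [measure_iUnion hdisj hpiece_meas]
  -- compute the measure of each piece
  have hpiece_eq : ∀ s, μ (piece s) = μ (Fh X (-1) s) * μ (Hit X (-(d : ℤ))) := by
    intro s
    have hmono : Monotone (TailM s) := by
      intro M M' hMM'
      simp only [hTailM, tailM_eq, Set.le_eq_subset]
      rintro ω ⟨t, ht, h⟩
      exact ⟨t, le_trans ht hMM', h⟩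
    have hdir : Directed (· ⊆ ·) (TailM s) := hmono.directed_le
    have h1 : μ (piece s) = ⨆ M, μ (Fh X (-1) s ∩ TailM s M) := by
      rw [hpiece]
      dsimp only
      rw [Set.inter_iUnion]
      exact Directed.measure_iUnion (by
        intro M M'
        exact ⟨max M M', Set.inter_subset_inter_right _ (hmono (le_max_left _ _)),
          Set.inter_subset_inter_right _ (hmono (le_max_right _ _))⟩)
    have h2 : ∀ M, μ (Fh X (-1) s ∩ TailM s M) = μ (Fh X (-1) s) * μ (TailM s M) := by
      intro M
      have hind := indep_tup_block (μ := μ) hmeas hindep s M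
      have := hind.measure_inter_preimage_eq_mul
        (s := {v : Fin s → ℤ | (∀ r, r < s → (-1 : ℤ) < psum s r v) ∧ psum s s v = -1})
        (t := CT d M) (measurableSet_pi' _) (measurableSet_pi' _)
      rw [id_Fh] at this
      exact this
    have h3 : ∀ M, μ (TailM s M) = μ (tup X M (fun i => (i : ℕ)) ⁻¹' CT d M) := by
      intro M
      exact tup_measure_eq hmeas hindep hident
        (fun i j hij => Fin.ext (by omega)) (fun i j hij => Fin.ext hij) _
    have h4 : (⨆ M, μ (tup X M (fun i => (i : ℕ)) ⁻¹' CT d M)) = μ (Hit X (-(d : ℤ))) := by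
      rw [← Directed.measure_iUnion]
      · congr 1
        ext ω
        simp only [Set.mem_iUnion, tailM0_eq, Set.mem_setOf_eq, Hit]
        constructor
        · rintro ⟨M, t, _, h⟩; exact ⟨t, h⟩
        · rintro ⟨t, h⟩; exact ⟨t, t, le_rfl, h⟩
      · intro M M'
        refine ⟨max M M', ?_, ?_⟩ <;>
        · simp only [tailM0_eq]
          rintro ω ⟨t, ht, h⟩
          exact ⟨t, le_trans ht (by omega), h⟩
    calc μ (piece s) = ⨆ M, μ (Fh X (-1) s ∩ TailM s M) := h1
      _ = ⨆ M, μ (Fh X (-1) s) * μ (tup X M (fun i => (i : ℕ)) ⁻¹' CT d M) := by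
          refine iSup_congr fun M => ?_
          rw [h2 M, h3 M]
      _ = μ (Fh X (-1) s) * ⨆ M, μ (tup X M (fun i => (i : ℕ)) ⁻¹' CT d M) := by
          rw [ENNReal.mul_iSup]
      _ = μ (Fh X (-1) s) * μ (Hit X (-(d : ℤ))) := by rw [h4]
  calc (∑' s, μ (piece s)) = ∑' s, μ (Fh X (-1) s) * μ (Hit X (-(d : ℤ))) := by
        exact tsum_congr hpiece_eq
    _ = (∑' s, μ (Fh X (-1) s)) * μ (Hit X (-(d : ℤ))) := ENNReal.tsum_mul_right
    _ = μ (Hit X (-1)) * μ (Hit X (-(d : ℤ))) := by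
        rw [sum_Fh hmeas hident hskip (by omega)]

lemma hit_pow (hmeas : ∀ n, Measurable (X n))
    (hindep : iIndepFun X μ)
    (hident : ∀ n, IdentDistrib (X n) (X 0) μ μ)
    (hskip : ∀ᵐ ω ∂μ, -1 ≤ X 0 ω) (d : ℕ) :
    μ (Hit X (-(d : ℤ))) = μ (Hit X (-1)) ^ d := by
  induction d with
  | zero =>
    have h : Hit X (-((0 : ℕ) : ℤ)) = Set.univ := by
      ext ω
      simp only [Hit, Set.mem_setOf_eq, Set.mem_univ, iff_true]
      exact ⟨0, by rw [pS_zero]; norm_num⟩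
    rw [h]
    simp
  | succ d ih =>
    have : (-(↑(d + 1) : ℤ)) = -(d : ℤ) - 1 := by push_cast; ring
    rw [this, hit_succ hmeas hindep hident hskip d, ih, pow_succ, mul_comm]
end WeakRecordAux

open WeakRecordAux

/-- Joint law of the weak upper record of a skip-free to the left random walk: with
`τ = inf {n > 0 : S_n ≥ 0}`, for all integers `0 ≤ j ≤ k`,
`ℙ[τ < ∞, S_τ = j, X_{τ-1} = k] = ℙ[X_0 = k] · c^(k-j)`, where
`c = ℙ[∃ n, S_n = -1]`.  The event `{τ < ∞, S_τ = j, X_{τ-1} = k}` is written as: there is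
`n ≥ 1` with `S_m < 0` for all `0 < m < n`, `S_n = j` and `X_{n-1} = k`. -/
theorem weak_record_joint_law {Ω : Type*} [MeasurableSpace Ω] (μ : Measure Ω)
    [IsProbabilityMeasure μ] (X : ℕ → Ω → ℤ)
    (hmeas : ∀ n, Measurable (X n))
    (hindep : iIndepFun X μ)
    (hident : ∀ n, IdentDistrib (X n) (X 0) μ μ)
    (hskip : ∀ᵐ ω ∂μ, -1 ≤ X 0 ω)
    (j k : ℤ) (hj : 0 ≤ j) (hjk : j ≤ k) :
    μ {ω | ∃ n : ℕ, 0 < n ∧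
        (∀ m : ℕ, 0 < m → m < n → ∑ l ∈ Finset.range m, X l ω < 0) ∧
        ∑ l ∈ Finset.range n, X l ω = j ∧ X (n - 1) ω = k} =
      μ {ω | X 0 ω = k} *
        (μ {ω | ∃ n : ℕ, ∑ l ∈ Finset.range n, X l ω = -1}) ^ (k - j).toNat := by
  classical
  set d : ℕ := (k - j).toNat with hd
  have hdk : (d : ℤ) = k - j := Int.toNat_of_nonneg (by omega)
  set D : ℕ → Set Ω := fun t =>
    (tup X t (fun i => (i : ℕ)) ⁻¹' CA (j - k) t) ∩ (X t ⁻¹' {k}) with hD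
  have hDchar : ∀ t ω, ω ∈ D t ↔
      ((∀ m, 0 < m → m ≤ t → pS X m ω < 0) ∧ pS X t ω = j - k) ∧ X t ω = k := by
    intro t ω
    rw [hD]
    simp only [Set.mem_inter_iff, Set.mem_preimage, Set.mem_singleton_iff]
    rw [← Set.mem_preimage, id_CA]
    simp only [Set.mem_setOf_eq]
  have hE : {ω | ∃ n : ℕ, 0 < n ∧
      (∀ m : ℕ, 0 < m → m < n → ∑ l ∈ Finset.range m, X l ω < 0) ∧
      ∑ l ∈ Finset.range n, X l ω = j ∧ X (n - 1) ω = k} = ⋃ t, D t := by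
    ext ω
    simp only [Set.mem_setOf_eq, Set.mem_iUnion]
    constructor
    · rintro ⟨n, hn, hneg, hsum, hX⟩
      refine ⟨n - 1, (hDchar (n - 1) ω).mpr ⟨⟨fun m hm hmt => hneg m hm (by omega), ?_⟩, ?_⟩⟩
      · have h1 : pS X n ω = pS X (n - 1) ω + X (n - 1) ω := by
          have := pS_succ X (n - 1) ω
          rwa [show n - 1 + 1 = n from by omega] at this
        have h2 : pS X n ω = j := hsum
        rw [hX] at h1
        omega
      · rwa [show n - 1 = n - 1 from rfl]
    · rintro ⟨t, hDt⟩
      obtain ⟨⟨hneg, hsum⟩, hX⟩ := (hDchar t ω).mp hDt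
      refine ⟨t + 1, Nat.succ_pos t, fun m hm hmt => hneg m hm (by omega), ?_, ?_⟩
      · have h1 : pS X (t + 1) ω = pS X t ω + X t ω := pS_succ X t ω
        show pS X (t + 1) ω = j
        rw [h1, hsum, hX]; ring
      · simpa using hX
  rw [hE]
  have hDdisj : Pairwise (Function.onFun Disjoint D) := by
    have key : ∀ s t, s < t → ∀ ω, ω ∈ D s → ω ∈ D t → False := by
      intro s t hst ω hs ht
      obtain ⟨⟨_, hsum_s⟩, hX_s⟩ := (hDchar s ω).mp hs
      obtain ⟨⟨hneg_t, _⟩, _⟩ := (hDchar t ω).mp ht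
      have h1 : pS X (s + 1) ω = pS X s ω + X s ω := pS_succ X s ω
      have h2 : pS X (s + 1) ω < 0 := hneg_t (s + 1) (Nat.succ_pos s) (by omega)
      omega
    intro s t hst
    rcases hst.lt_or_gt with h | h
    · exact Set.disjoint_left.mpr fun ω hs ht => key s t h ω hs ht
    · exact Set.disjoint_left.mpr fun ω ht hs => key t s h ω hs ht
  have hDmeas : ∀ t, MeasurableSet (D t) := by
    intro t
    exact ((measurable_tup hmeas t _) (measurableSet_pi' _)).inter
      ((hmeas t) ((Set.to_countable _).measurableSet))
  rw [measure_iUnion hDdisj hDmeas]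
  have hDval : ∀ t, μ (D t) = μ (Fh X (j - k) t) * μ {ω | X 0 ω = k} := by
    intro t
    have hind := indep_tup_last (μ := μ) hmeas hindep t
    have h1 := hind.measure_inter_preimage_eq_mul (s := CA (j - k) t) (t := ({k} : Set ℤ))
      (measurableSet_pi' _) ((Set.to_countable _).measurableSet)
    rw [hD]
    dsimp only
    rw [h1]
    congr 1
    · rw [tup_measure_eq hmeas hindep hident (fun a b hab => Fin.ext hab)
        (fun a b hab => Fin.ext (by
          have ha := a.2; have hb := b.2
          have hab' : t - 1 - (a : ℕ) = t - 1 - (b : ℕ) := hab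
          omega)) (CA (j - k) t)]
      rw [rev_CA]
    · rw [← Measure.map_apply (hmeas t) ((Set.to_countable _).measurableSet),
        (hident t).map_eq, Measure.map_apply (hmeas 0) ((Set.to_countable _).measurableSet)]
      rfl
  calc (∑' t, μ (D t)) = ∑' t, μ (Fh X (j - k) t) * μ {ω | X 0 ω = k} := tsum_congr hDval
    _ = (∑' t, μ (Fh X (j - k) t)) * μ {ω | X 0 ω = k} := ENNReal.tsum_mul_right
    _ = μ (Hit X (j - k)) * μ {ω | X 0 ω = k} := by
        rw [sum_Fh hmeas hident hskip (by omega)]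
    _ = μ (Hit X (-(d : ℤ))) * μ {ω | X 0 ω = k} := by rw [show -(d : ℤ) = j - k by omega]
    _ = μ (Hit X (-1)) ^ d * μ {ω | X 0 ω = k} := by
        rw [hit_pow hmeas hindep hident hskip d]
    _ = μ {ω | X 0 ω = k} * (μ {ω | ∃ n : ℕ, ∑ l ∈ Finset.range n, X l ω = -1}) ^ d := by
        rw [mul_comm]; rfl
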